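/- Let f be convex differentiable with L-Lipschitz gradient, g closed convex, φ = f + g with nonempty minimizer set 𝒳 and minimum φ*, and γ ≥ L. Then the proximal gradient step satisfies φ(p(y)) − φ* ≤ ‖G(y)‖·d(y, 𝒳) − (1/(2γ))‖G(y)‖² for any y, where p(y) is the proximal gradient step from y and G(y) = γ(y − p(y)). -/

import Mathlib

open RealInnerProductSpace Metric Set Filter

abbrev Euc (n : ℕ) : Type := EuclideanSpace ℝ (Fin n)

section aux
variable {n : ℕ}

lemma hasDerivAt_line (f : Euc n → ℝ) (f' : Euc n → Euc n)
    (hgrad : ∀ x, HasGradientAt f (f' x) x) (a d : Euc n) (t : ℝ) :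
    HasDerivAt (fun s : ℝ => f (a + s • d)) ⟪f' (a + t • d), d⟫ t := by
  have h1 : HasDerivAt (fun s : ℝ => a + s • d) d t := by
    simpa using ((hasDerivAt_id t).smul_const d).const_add a
  have h2 := (hgrad (a + t • d)).hasFDerivAt
  have h3 := h2.comp_hasDerivAt t h1
  simpa [InnerProductSpace.toDual_apply_apply, Function.comp_def] using h3

lemma convex_first_order (f : Euc n → ℝ) (f' : Euc n → Euc n)
    (hconv : ConvexOn ℝ Set.univ f) (hgrad : ∀ x, HasGradientAt f (f' x) x)
    (a b : Euc n) : f a + ⟪f' a, b - a⟫ ≤ f b := by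
  have heq : (fun s : ℝ => f (a + s • (b - a))) = f ∘ (AffineMap.lineMap a b) := by
    funext s
    simp only [Function.comp_apply, AffineMap.lineMap_apply, vsub_eq_sub, vadd_eq_add]
    rw [add_comm]
  have hψconv : ConvexOn ℝ Set.univ (fun s : ℝ => f (a + s • (b - a))) := by
    rw [heq]
    have := hconv.comp_affineMap (AffineMap.lineMap a b)
    simpa using this
  have hd : HasDerivAt (fun s : ℝ => f (a + s • (b - a))) ⟪f' a, b - a⟫ 0 := by
    have := hasDerivAt_line f f' hgrad a (b - a) 0
    simpa using this
  have hsl := hψconv.le_slope_of_hasDerivAt (Set.mem_univ (0:ℝ)) (Set.mem_univ 1) one_pos hd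
  rw [slope_def_field] at hsl
  simp only [zero_smul, add_zero, one_smul, sub_zero, div_one] at hsl
  have hab : a + (b - a) = b := by abel
  rw [hab] at hsl
  linarith

lemma descent_lemma (L : ℝ) (hL : 0 < L) (f : Euc n → ℝ) (f' : Euc n → Euc n)
    (hgrad : ∀ x, HasGradientAt f (f' x) x)
    (hLip : ∀ x y, ‖f' x - f' y‖ ≤ L * ‖x - y‖)
    (a b : Euc n) : f b ≤ f a + ⟪f' a, b - a⟫ + L / 2 * ‖b - a‖ ^ 2 := by
  set d := b - a with hd
  have hcontf' : Continuous f' := by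
    have : LipschitzWith ⟨L, hL.le⟩ f' := by
      apply LipschitzWith.of_dist_le_mul
      intro x y
      rw [dist_eq_norm, dist_eq_norm]; exact hLip x y
    exact this.continuous
  have hderiv : ∀ t ∈ Set.uIcc (0:ℝ) 1,
      HasDerivAt (fun s : ℝ => f (a + s • d)) ⟪f' (a + t • d), d⟫ t :=
    fun t _ => hasDerivAt_line f f' hgrad a d t
  have hcurve : Continuous (fun t : ℝ => a + t • d) :=
    continuous_const.add (continuous_id.smul continuous_const)
  have hcont : Continuous (fun t : ℝ => ⟪f' (a + t • d), d⟫) :=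
    (hcontf'.comp hcurve).inner continuous_const
  have hint : IntervalIntegrable (fun t : ℝ => ⟪f' (a + t • d), d⟫)
      MeasureTheory.volume 0 1 := hcont.intervalIntegrable 0 1
  have hftc := intervalIntegral.integral_eq_sub_of_hasDerivAt hderiv hint
  simp only [zero_smul, add_zero, one_smul] at hftc
  have hab : a + d = b := by rw [hd]; abel
  rw [hab] at hftc
  have hbound : ∀ t ∈ Set.Icc (0:ℝ) 1,
      ⟪f' (a + t • d), d⟫ ≤ ⟪f' a, d⟫ + t * (L * ‖d‖ ^ 2) := by
    intro t ht
    have h1 : ⟪f' (a + t • d), d⟫ - ⟪f' a, d⟫ = ⟪f' (a + t • d) - f' a, d⟫ := by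
      rw [inner_sub_left]
    have h2 : ⟪f' (a + t • d) - f' a, d⟫ ≤ ‖f' (a + t • d) - f' a‖ * ‖d‖ :=
      real_inner_le_norm _ _
    have h3 : ‖f' (a + t • d) - f' a‖ ≤ L * (t * ‖d‖) := by
      have := hLip (a + t • d) a
      simpa [norm_smul, abs_of_nonneg ht.1] using this
    nlinarith [norm_nonneg d, norm_nonneg (f' (a + t • d) - f' a), ht.1]
  have hic2 : IntervalIntegrable (fun t : ℝ => t * (L * ‖d‖ ^ 2))
      MeasureTheory.volume 0 1 :=
    (continuous_id.mul continuous_const).intervalIntegrable 0 1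
  have hic : IntervalIntegrable (fun t : ℝ => ⟪f' a, d⟫ + t * (L * ‖d‖ ^ 2))
      MeasureTheory.volume 0 1 :=
    (intervalIntegrable_const).add hic2
  have hmono : ∫ t in (0:ℝ)..1, ⟪f' (a + t • d), d⟫
      ≤ ∫ t in (0:ℝ)..1, (⟪f' a, d⟫ + t * (L * ‖d‖ ^ 2)) :=
    intervalIntegral.integral_mono_on (by norm_num) hint hic hbound
  have hcalc : (∫ t in (0:ℝ)..1, (⟪f' a, d⟫ + t * (L * ‖d‖ ^ 2)))
      = ⟪f' a, d⟫ + L / 2 * ‖d‖ ^ 2 := by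
    rw [intervalIntegral.integral_add intervalIntegrable_const hic2,
      intervalIntegral.integral_mul_const, integral_id]
    simp
    ring
  rw [hftc] at hmono
  rw [hcalc] at hmono
  linarith

lemma ereal_solve {a b : ℝ} {z : EReal} (hz : z ≠ ⊥) (h : (a : EReal) + z = (b : EReal)) :
    z = ((b - a : ℝ) : EReal) := by
  induction z with
  | bot => exact absurd rfl hz
  | coe r =>
    norm_cast at h ⊢
    linarith
  | top =>
    rw [EReal.add_top_of_ne_bot (by simp : (a:EReal) ≠ ⊥)] at h
    exact absurd h (EReal.top_ne_coe b)

end aux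

set_option maxHeartbeats 1000000 in
theorem stmt_17 {n : ℕ} (L γ : ℝ) (hL : 0 < L) (hγ : γ ≥ L)
    (f : Euc n → ℝ) (f' : Euc n → Euc n) (g : Euc n → EReal)
    (hconv : ConvexOn ℝ Set.univ f)
    (hgrad : ∀ x, HasGradientAt f (f' x) x)
    (hLip : ∀ x y, ‖f' x - f' y‖ ≤ L * ‖x - y‖)
    (hgbot : ∀ x, g x ≠ ⊥) (hgtop : ∃ x, g x ≠ ⊤)
    (hglsc : LowerSemicontinuous g)
    (hgconv : ∀ x y : Euc n, ∀ a b : ℝ, 0 ≤ a → 0 ≤ b → a + b = 1 →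
      g (a • x + b • y) ≤ (a : EReal) * g x + (b : EReal) * g y)
    (p : Euc n → Euc n)
    (hp : ∀ xb x, ((f xb + ⟪f' xb, p xb - xb⟫ + γ / 2 * ‖p xb - xb‖ ^ 2 : ℝ) : EReal) + g (p xb)
        ≤ ((f xb + ⟪f' xb, x - xb⟫ + γ / 2 * ‖x - xb‖ ^ 2 : ℝ) : EReal) + g x)
    (X : Set (Euc n))
    (hX : X = {x | ∀ y, (f x : EReal) + g x ≤ (f y : EReal) + g y})
    (hne : X.Nonempty)
    (xs : Euc n) (hxs : xs ∈ X)
    (fstar : ℝ) (hstar : (f xs : EReal) + g xs = (fstar : ℝ))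
    : ∀ y, (f (p y) : EReal) + g (p y) ≤
      ((fstar + (‖γ • (y - p y)‖ * Metric.infDist y X
        - 1 / (2 * γ) * ‖γ • (y - p y)‖ ^ 2) : ℝ) : EReal) := by
  intro y
  have hγ0 : 0 < γ := lt_of_lt_of_le hL hγ
  set P := p y with hP
  have hgxs : g xs = ((fstar - f xs : ℝ) : EReal) := ereal_solve (hgbot xs) hstar
  have hphiX : ∀ x ∈ X, g x = ((fstar - f x : ℝ) : EReal) := by
    intro x hx
    rw [hX] at hx hxs
    have h1 : (f x : EReal) + g x ≤ (f xs : EReal) + g xs := hx xs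
    have h2 : (f xs : EReal) + g xs ≤ (f x : EReal) + g x := hxs x
    have : (f x : EReal) + g x = (fstar : EReal) := le_antisymm (h1.trans_eq hstar) (hstar ▸ h2)
    exact ereal_solve (hgbot x) this
  have hgPreal : ∃ gp : ℝ, g P = (gp : EReal) := by
    have h := hp y xs
    rw [hgxs] at h
    have hne' : g (p y) ≠ ⊤ := by
      intro htop
      rw [htop, EReal.add_top_of_ne_bot (EReal.coe_ne_bot _), ← EReal.coe_add, top_le_iff] at h
      exact EReal.coe_ne_top _ h
    exact ⟨(g P).toReal, (EReal.coe_toReal hne' (hgbot P)).symm⟩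
  obtain ⟨gp, hgp⟩ := hgPreal
  have hsub : ∀ (x : Euc n) (gx : ℝ), g x = (gx : EReal) →
      gp ≤ gx + ⟪f' y, x - P⟫ + γ * ⟪P - y, x - P⟫ := by
    intro x gx hgx
    set S := gx + ⟪f' y, x - P⟫ + γ * ⟪P - y, x - P⟫ - gp with hS
    by_contra hcon
    push_neg at hcon
    have hSneg : S < 0 := by rw [hS]; linarith
    set B := γ / 2 * ‖x - P‖ ^ 2 with hBdef
    have hB : (0:ℝ) ≤ B := by rw [hBdef]; positivity
    have hkey : ∀ t : ℝ, 0 < t → t ≤ 1 → 0 ≤ S + B * t := by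
      intro t ht0 ht1
      have hz : P + t • (x - P) = (1 - t) • P + t • x := by module
      have hgz : g (P + t • (x - P)) ≤ (((1 - t) * gp + t * gx : ℝ) : EReal) := by
        rw [hz]
        calc g ((1 - t) • P + t • x) ≤ ((1-t : ℝ) : EReal) * g P + ((t : ℝ) : EReal) * g x :=
              hgconv P x (1 - t) t (by linarith) ht0.le (by ring)
          _ = (((1 - t) * gp + t * gx : ℝ) : EReal) := by
              rw [hgp, hgx]; norm_cast
      have hhp := hp y (P + t • (x - P))
      rw [hgp] at hhp
      have hhp2 : ((f y + ⟪f' y, P - y⟫ + γ / 2 * ‖P - y‖ ^ 2 + gp : ℝ) : EReal)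
          ≤ ((f y + ⟪f' y, (P + t • (x - P)) - y⟫ + γ / 2 * ‖(P + t • (x - P)) - y‖ ^ 2
              + ((1 - t) * gp + t * gx) : ℝ) : EReal) := by
        rw [EReal.coe_add _ gp, EReal.coe_add _ ((1 - t) * gp + t * gx)]
        calc ((f y + ⟪f' y, P - y⟫ + γ / 2 * ‖P - y‖ ^ 2 : ℝ) : EReal) + (gp : EReal)
            ≤ ((f y + ⟪f' y, (P + t • (x - P)) - y⟫ + γ / 2 * ‖(P + t • (x - P)) - y‖ ^ 2 : ℝ)
              : EReal) + g (P + t • (x - P)) := hhp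
          _ ≤ _ := by gcongr
      rw [EReal.coe_le_coe_iff] at hhp2
      have hexp1 : ⟪f' y, (P + t • (x - P)) - y⟫ = ⟪f' y, P - y⟫ + t * ⟪f' y, x - P⟫ := by
        have h1 : (P + t • (x - P)) - y = (P - y) + t • (x - P) := by abel
        rw [h1, inner_add_right, real_inner_smul_right]
      have hexp2 : ‖(P + t • (x - P)) - y‖ ^ 2
          = ‖P - y‖ ^ 2 + 2 * t * ⟪P - y, x - P⟫ + t ^ 2 * ‖x - P‖ ^ 2 := by
        have h1 : (P + t • (x - P)) - y = (P - y) + t • (x - P) := by abel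
        rw [h1, @norm_add_sq_real, real_inner_smul_right, norm_smul]
        simp only [Real.norm_eq_abs, abs_of_nonneg ht0.le, mul_pow]
        ring
      rw [hexp1, hexp2] at hhp2
      have h0' : 0 ≤ t * (S + B * t) := by
        have heq : t * (S + B * t)
            = t * ⟪f' y, x - P⟫
              + γ / 2 * (2 * t * ⟪P - y, x - P⟫ + t ^ 2 * ‖x - P‖ ^ 2)
              + t * (gx - gp) := by rw [hS, hBdef]; ring
        rw [heq]; linarith
      nlinarith [h0', ht0]
    rcases eq_or_lt_of_le hB with hB0 | hBpos
    · have hk := hkey 1 one_pos le_rfl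
      nlinarith
    · have ht0 : 0 < min 1 (-S / (2 * B)) :=
        lt_min one_pos (div_pos (by linarith) (by linarith))
      have ht1 : min 1 (-S / (2 * B)) ≤ 1 := min_le_left _ _
      have hk := hkey _ ht0 ht1
      have hle : min 1 (-S / (2 * B)) ≤ -S / (2 * B) := min_le_right _ _
      have hBmin : B * min 1 (-S / (2 * B)) ≤ B * (-S / (2 * B)) :=
        mul_le_mul_of_nonneg_left hle hB
      have hv : B * (-S / (2 * B)) = -S / 2 := by field_simp
      linarith
  have key : ∀ x ∈ X, f P + gp ≤ fstar + ‖γ • (y - P)‖ * dist y x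
      - 1 / (2 * γ) * ‖γ • (y - P)‖ ^ 2 := by
    intro x hx
    have hgx := hphiX x hx
    have hs := hsub x (fstar - f x) hgx
    have hdesc := descent_lemma L hL f f' hgrad hLip y P
    have hfo := convex_first_order f f' hconv hgrad y x
    have hGnorm : ‖γ • (y - P)‖ = γ * ‖P - y‖ := by
      rw [norm_smul, Real.norm_eq_abs, abs_of_pos hγ0, norm_sub_rev]
    have hCS : ⟪P - y, x - y⟫ ≤ ‖P - y‖ * ‖x - y‖ := real_inner_le_norm _ _
    have hdist : dist y x = ‖x - y‖ := by rw [dist_eq_norm, norm_sub_rev]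
    have hinner : ⟪P - y, x - P⟫ = ⟪P - y, x - y⟫ - ‖P - y‖ ^ 2 := by
      have h1 : x - P = (x - y) - (P - y) := by abel
      rw [h1, inner_sub_right, real_inner_self_eq_norm_sq]
    have hinner2 : ⟪f' y, x - P⟫ = ⟪f' y, x - y⟫ - ⟪f' y, P - y⟫ := by
      have h1 : x - P = (x - y) - (P - y) := by abel
      rw [h1, inner_sub_right]
    have hGsq : 1 / (2 * γ) * ‖γ • (y - P)‖ ^ 2 = γ / 2 * ‖P - y‖ ^ 2 := by
      rw [hGnorm]; field_simp
    rw [hGsq, hGnorm, hdist]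
    nlinarith [mul_le_mul_of_nonneg_left hCS hγ0.le, sq_nonneg ‖P - y‖,
      mul_le_mul_of_nonneg_right hγ (sq_nonneg ‖P - y‖)]
  have hfinal : f P + gp ≤ fstar + ‖γ • (y - P)‖ * infDist y X
      - 1 / (2 * γ) * ‖γ • (y - P)‖ ^ 2 := by
    have h2 : f P + gp + 1 / (2 * γ) * ‖γ • (y - P)‖ ^ 2 - fstar
        ≤ ‖γ • (y - P)‖ * infDist y X := by
      apply le_of_forall_pos_le_add
      intro ε hε
      have hG0 : (0:ℝ) ≤ ‖γ • (y - P)‖ := norm_nonneg _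
      have hlt : infDist y X < infDist y X + ε / (‖γ • (y - P)‖ + 1) := by
        have : 0 < ε / (‖γ • (y - P)‖ + 1) := by positivity
        linarith
      obtain ⟨x, hxX, hxd⟩ := (infDist_lt_iff hne).mp hlt
      have hk := key x hxX
      have h3 : ‖γ • (y - P)‖ * dist y x
          ≤ ‖γ • (y - P)‖ * (infDist y X + ε / (‖γ • (y - P)‖ + 1)) :=
        mul_le_mul_of_nonneg_left hxd.le hG0
      have h4 : ‖γ • (y - P)‖ * (ε / (‖γ • (y - P)‖ + 1)) ≤ ε := by
        rw [mul_div_assoc', div_le_iff₀ (by positivity)]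
        nlinarith [hε.le, hG0]
      linarith
    linarith
  rw [hgp]
  norm_cast
  linarith
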